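/- Let β > 0, m, n ∈ ℕ with m, n ≥ 1, and a, b, c, d ∈ ℝ with a = −c and b = d (or alternatively a = c and b = −d). Set μ² = m² + n², let γ > 0, and let Z : ℝ → ℝ be either Z(z) = cos(γz) with β·cos γ = γ·sin γ, or Z(z) = sin(γz) with β·sin γ = −γ·cos γ. Set λ = μ² + γ², define u = (u₁, u₂, u₃) : ℝ³ → ℝ³ by u₁(x,y,z) = Z(z)·P^u_{m,n}(x,y), u₂(x,y,z) = −(m/n)·Z(z)·P^v_{m,n}(x,y), u₃ = 0, and for γ₀ ∈ ℝ define v(t, x, y, z) = γ₀·e^{−λt}·u(x, y, z). Then for all t ∈ ℝ and (x,y,z) ∈ ℝ³: (i) ∂_t v − Δv + (v·∇)v = 0 (componentwise, with Δ the Laplacian in (x,y,z) and ((v·∇)v)_i = Σ_j v_j ∂_j v_i); (ii) ∂ₓv₁ + ∂_y v₂ + ∂_z v₃ = 0; (iii) v₃ = 0; (iv) ∂_z v_j(t,x,y,1) + β·v_j(t,x,y,1) = 0 and −∂_z v_j(t,x,y,−1) + β·v_j(t,x,y,−1) = 0 for j = 1,2. -/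

import Mathlib

open Real

/-- The periodic profile 𝒫ᵘ_{m,n}. -/
noncomputable def Pu (m n : ℕ) (a b c d : ℝ) (x y : ℝ) : ℝ :=
  a * Real.cos (m * x) * Real.sin (n * y) - b * Real.sin (m * x) * Real.sin (n * y)
    - c * Real.sin (m * x) * Real.cos (n * y) + d * Real.cos (m * x) * Real.cos (n * y)

/-- The periodic profile 𝒫ᵛ_{m,n}. -/
noncomputable def Pv (m n : ℕ) (a b c d : ℝ) (x y : ℝ) : ℝ :=
  a * Real.sin (m * x) * Real.cos (n * y) + b * Real.cos (m * x) * Real.cos (n * y)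
    - c * Real.cos (m * x) * Real.sin (n * y) - d * Real.sin (m * x) * Real.sin (n * y)

/-- Auxiliary profile: (−1/m) ∂ₓ Pu. -/
noncomputable def Sf (m n : ℕ) (a b c d : ℝ) (x y : ℝ) : ℝ :=
  a * Real.sin (m * x) * Real.sin (n * y) + b * Real.cos (m * x) * Real.sin (n * y)
    + c * Real.cos (m * x) * Real.cos (n * y) + d * Real.sin (m * x) * Real.cos (n * y)

/-- Auxiliary profile: (1/n) ∂_y Pu. -/
noncomputable def Tf (m n : ℕ) (a b c d : ℝ) (x y : ℝ) : ℝ :=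
  a * Real.cos (m * x) * Real.cos (n * y) - b * Real.sin (m * x) * Real.cos (n * y)
    + c * Real.sin (m * x) * Real.sin (n * y) - d * Real.cos (m * x) * Real.sin (n * y)

lemma hd_cos (k x : ℝ) : HasDerivAt (fun t => Real.cos (k * t)) (-(k * Real.sin (k * x))) x := by
  have h : HasDerivAt (fun t : ℝ => k * t) k x := by
    simpa using (hasDerivAt_id x).const_mul k
  simpa [mul_comm, Function.comp_def] using (Real.hasDerivAt_cos (k * x)).comp x h

lemma hd_sin (k x : ℝ) : HasDerivAt (fun t => Real.sin (k * t)) (k * Real.cos (k * x)) x := by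
  have h : HasDerivAt (fun t : ℝ => k * t) k x := by
    simpa using (hasDerivAt_id x).const_mul k
  simpa [mul_comm, Function.comp_def] using (Real.hasDerivAt_sin (k * x)).comp x h

lemma hd_exp (k x : ℝ) : HasDerivAt (fun t => Real.exp (k * t)) (k * Real.exp (k * x)) x := by
  have h : HasDerivAt (fun t : ℝ => k * t) k x := by
    simpa using (hasDerivAt_id x).const_mul k
  simpa [mul_comm, Function.comp_def] using (Real.hasDerivAt_exp (k * x)).comp x h

section profiles
variable (m n : ℕ) (a b c d x y : ℝ)

lemma hPu_x : HasDerivAt (fun x' => Pu m n a b c d x' y)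
    (-((m : ℝ) * Sf m n a b c d x y)) x := by
  unfold Pu
  have h1 := ((hd_cos (m:ℝ) x).const_mul a).mul_const (Real.sin ((n:ℝ) * y))
  have h2 := ((hd_sin (m:ℝ) x).const_mul b).mul_const (Real.sin ((n:ℝ) * y))
  have h3 := ((hd_sin (m:ℝ) x).const_mul c).mul_const (Real.cos ((n:ℝ) * y))
  have h4 := ((hd_cos (m:ℝ) x).const_mul d).mul_const (Real.cos ((n:ℝ) * y))
  exact (((h1.sub h2).sub h3).add h4).congr_deriv (by unfold Sf; ring)

lemma hPu_y : HasDerivAt (fun y' => Pu m n a b c d x y')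
    ((n : ℝ) * Tf m n a b c d x y) y := by
  unfold Pu
  have h1 := (hd_sin (n:ℝ) y).const_mul (a * Real.cos ((m:ℝ) * x))
  have h2 := (hd_sin (n:ℝ) y).const_mul (b * Real.sin ((m:ℝ) * x))
  have h3 := (hd_cos (n:ℝ) y).const_mul (c * Real.sin ((m:ℝ) * x))
  have h4 := (hd_cos (n:ℝ) y).const_mul (d * Real.cos ((m:ℝ) * x))
  exact (((h1.sub h2).sub h3).add h4).congr_deriv (by unfold Tf; ring)

lemma hS_x : HasDerivAt (fun x' => Sf m n a b c d x' y)
    ((m : ℝ) * Pu m n a b c d x y) x := by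
  unfold Sf
  have h1 := ((hd_sin (m:ℝ) x).const_mul a).mul_const (Real.sin ((n:ℝ) * y))
  have h2 := ((hd_cos (m:ℝ) x).const_mul b).mul_const (Real.sin ((n:ℝ) * y))
  have h3 := ((hd_cos (m:ℝ) x).const_mul c).mul_const (Real.cos ((n:ℝ) * y))
  have h4 := ((hd_sin (m:ℝ) x).const_mul d).mul_const (Real.cos ((n:ℝ) * y))
  exact (((h1.add h2).add h3).add h4).congr_deriv (by unfold Pu; ring)

lemma hS_y : HasDerivAt (fun y' => Sf m n a b c d x y')
    ((n : ℝ) * Pv m n a b c d x y) y := by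
  unfold Sf
  have h1 := (hd_sin (n:ℝ) y).const_mul (a * Real.sin ((m:ℝ) * x))
  have h2 := (hd_sin (n:ℝ) y).const_mul (b * Real.cos ((m:ℝ) * x))
  have h3 := (hd_cos (n:ℝ) y).const_mul (c * Real.cos ((m:ℝ) * x))
  have h4 := (hd_cos (n:ℝ) y).const_mul (d * Real.sin ((m:ℝ) * x))
  exact (((h1.add h2).add h3).add h4).congr_deriv (by unfold Pv; ring)

lemma hT_x : HasDerivAt (fun x' => Tf m n a b c d x' y)
    (-((m : ℝ) * Pv m n a b c d x y)) x := by
  unfold Tf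
  have h1 := ((hd_cos (m:ℝ) x).const_mul a).mul_const (Real.cos ((n:ℝ) * y))
  have h2 := ((hd_sin (m:ℝ) x).const_mul b).mul_const (Real.cos ((n:ℝ) * y))
  have h3 := ((hd_sin (m:ℝ) x).const_mul c).mul_const (Real.sin ((n:ℝ) * y))
  have h4 := ((hd_cos (m:ℝ) x).const_mul d).mul_const (Real.sin ((n:ℝ) * y))
  exact (((h1.sub h2).add h3).sub h4).congr_deriv (by unfold Pv; ring)

lemma hT_y : HasDerivAt (fun y' => Tf m n a b c d x y')
    (-((n : ℝ) * Pu m n a b c d x y)) y := by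
  unfold Tf
  have h1 := (hd_cos (n:ℝ) y).const_mul (a * Real.cos ((m:ℝ) * x))
  have h2 := (hd_cos (n:ℝ) y).const_mul (b * Real.sin ((m:ℝ) * x))
  have h3 := (hd_sin (n:ℝ) y).const_mul (c * Real.sin ((m:ℝ) * x))
  have h4 := (hd_sin (n:ℝ) y).const_mul (d * Real.cos ((m:ℝ) * x))
  exact (((h1.sub h2).add h3).sub h4).congr_deriv (by unfold Pu; ring)

lemma hPv_x : HasDerivAt (fun x' => Pv m n a b c d x' y)
    ((m : ℝ) * Tf m n a b c d x y) x := by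
  unfold Pv
  have h1 := ((hd_sin (m:ℝ) x).const_mul a).mul_const (Real.cos ((n:ℝ) * y))
  have h2 := ((hd_cos (m:ℝ) x).const_mul b).mul_const (Real.cos ((n:ℝ) * y))
  have h3 := ((hd_cos (m:ℝ) x).const_mul c).mul_const (Real.sin ((n:ℝ) * y))
  have h4 := ((hd_sin (m:ℝ) x).const_mul d).mul_const (Real.sin ((n:ℝ) * y))
  exact (((h1.add h2).sub h3).sub h4).congr_deriv (by unfold Tf; ring)

lemma hPv_y : HasDerivAt (fun y' => Pv m n a b c d x y')
    (-((n : ℝ) * Sf m n a b c d x y)) y := by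
  unfold Pv
  have h1 := (hd_cos (n:ℝ) y).const_mul (a * Real.sin ((m:ℝ) * x))
  have h2 := (hd_cos (n:ℝ) y).const_mul (b * Real.cos ((m:ℝ) * x))
  have h3 := (hd_sin (n:ℝ) y).const_mul (c * Real.cos ((m:ℝ) * x))
  have h4 := (hd_sin (n:ℝ) y).const_mul (d * Real.sin ((m:ℝ) * x))
  exact (((h1.add h2).sub h3).sub h4).congr_deriv (by unfold Sf; ring)

end profiles

/-- With a = −c, b = d (or a = c, b = −d), the field v = γ₀ e^{−λt} u, where u is a
constant-pressure Stokes eigenfunction with eigenvalue λ, is a global solution of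
the Navier–Stokes equations on the channel with Navier slip-with-friction
boundary conditions. -/
theorem stmt_16 (β : ℝ) (hβ : 0 < β) (m n : ℕ) (hm : 1 ≤ m) (hn : 1 ≤ n)
    (a b c d : ℝ) (hcoef : (a = -c ∧ b = d) ∨ (a = c ∧ b = -d))
    (γ : ℝ) (hγ : 0 < γ) (Z : ℝ → ℝ)
    (hZ : ((Z = fun z => Real.cos (γ * z)) ∧ β * Real.cos γ = γ * Real.sin γ) ∨
          ((Z = fun z => Real.sin (γ * z)) ∧ β * Real.sin γ = -(γ * Real.cos γ)))
    (lam : ℝ) (hlam : lam = ((m : ℝ) ^ 2 + (n : ℝ) ^ 2) + γ ^ 2)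
    (u₁ u₂ u₃ : ℝ → ℝ → ℝ → ℝ)
    (hu₁ : ∀ x y z, u₁ x y z = Z z * Pu m n a b c d x y)
    (hu₂ : ∀ x y z, u₂ x y z = -((m : ℝ) / (n : ℝ)) * Z z * Pv m n a b c d x y)
    (hu₃ : ∀ x y z, u₃ x y z = 0)
    (γ₀ : ℝ) (v₁ v₂ v₃ : ℝ → ℝ → ℝ → ℝ → ℝ)
    (hv₁ : ∀ t x y z, v₁ t x y z = γ₀ * Real.exp (-lam * t) * u₁ x y z)
    (hv₂ : ∀ t x y z, v₂ t x y z = γ₀ * Real.exp (-lam * t) * u₂ x y z)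
    (hv₃ : ∀ t x y z, v₃ t x y z = γ₀ * Real.exp (-lam * t) * u₃ x y z) :
    (∀ t x y z : ℝ,
      (deriv (fun t' => v₁ t' x y z) t
        - (deriv (deriv (fun x' => v₁ t x' y z)) x + deriv (deriv (fun y' => v₁ t x y' z)) y
            + deriv (deriv (fun z' => v₁ t x y z')) z)
        + (v₁ t x y z * deriv (fun x' => v₁ t x' y z) x
            + v₂ t x y z * deriv (fun y' => v₁ t x y' z) y
            + v₃ t x y z * deriv (fun z' => v₁ t x y z') z) = 0) ∧
      (deriv (fun t' => v₂ t' x y z) t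
        - (deriv (deriv (fun x' => v₂ t x' y z)) x + deriv (deriv (fun y' => v₂ t x y' z)) y
            + deriv (deriv (fun z' => v₂ t x y z')) z)
        + (v₁ t x y z * deriv (fun x' => v₂ t x' y z) x
            + v₂ t x y z * deriv (fun y' => v₂ t x y' z) y
            + v₃ t x y z * deriv (fun z' => v₂ t x y z') z) = 0) ∧
      (deriv (fun t' => v₃ t' x y z) t
        - (deriv (deriv (fun x' => v₃ t x' y z)) x + deriv (deriv (fun y' => v₃ t x y' z)) y
            + deriv (deriv (fun z' => v₃ t x y z')) z)
        + (v₁ t x y z * deriv (fun x' => v₃ t x' y z) x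
            + v₂ t x y z * deriv (fun y' => v₃ t x y' z) y
            + v₃ t x y z * deriv (fun z' => v₃ t x y z') z) = 0)) ∧
    (∀ t x y z : ℝ,
      deriv (fun x' => v₁ t x' y z) x + deriv (fun y' => v₂ t x y' z) y
        + deriv (fun z' => v₃ t x y z') z = 0) ∧
    (∀ t x y z : ℝ, v₃ t x y z = 0) ∧
    (∀ t x y : ℝ,
      (deriv (fun z => v₁ t x y z) 1 + β * v₁ t x y 1 = 0) ∧
      (deriv (fun z => v₂ t x y z) 1 + β * v₂ t x y 1 = 0) ∧
      (-deriv (fun z => v₁ t x y z) (-1) + β * v₁ t x y (-1) = 0) ∧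
      (-deriv (fun z => v₂ t x y z) (-1) + β * v₂ t x y (-1) = 0)) := by
  have hn' : (n : ℝ) ≠ 0 := Nat.cast_ne_zero.mpr (by omega)
  -- package the properties of Z into an abstract derivative `W`
  obtain ⟨W, hZW, hWd, hb1, hb2⟩ :
      ∃ W : ℝ → ℝ, (∀ z, HasDerivAt Z (W z) z) ∧ (∀ z, HasDerivAt W (-(γ ^ 2) * Z z) z)
        ∧ (W 1 + β * Z 1 = 0) ∧ (-W (-1) + β * Z (-1) = 0) := by
    rcases hZ with ⟨rfl, hβγ⟩ | ⟨rfl, hβγ⟩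
    · refine ⟨fun z => -(γ * Real.sin (γ * z)), fun z => hd_cos γ z, fun z => ?_, ?_, ?_⟩
      · exact ((hd_sin γ z).const_mul γ).neg.congr_deriv
          (show -(γ * (γ * Real.cos (γ * z))) = -(γ ^ 2) * Real.cos (γ * z) by ring)
      · show -(γ * Real.sin (γ * 1)) + β * Real.cos (γ * 1) = 0
        norm_num; linarith
      · show -(-(γ * Real.sin (γ * (-1)))) + β * Real.cos (γ * (-1)) = 0
        rw [mul_neg_one, Real.sin_neg, Real.cos_neg] <;> try skip
        linarith
    · refine ⟨fun z => γ * Real.cos (γ * z), fun z => hd_sin γ z, fun z => ?_, ?_, ?_⟩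
      · exact (((hd_cos γ z).const_mul γ)).congr_deriv
          (show γ * -(γ * Real.sin (γ * z)) = -(γ ^ 2) * Real.sin (γ * z) by ring)
      · show γ * Real.cos (γ * 1) + β * Real.sin (γ * 1) = 0
        norm_num; linarith
      · show -(γ * Real.cos (γ * (-1))) + β * Real.sin (γ * (-1)) = 0
        rw [mul_neg_one, Real.sin_neg, Real.cos_neg] <;> try skip
        linarith
  refine ⟨?_, ?_, ?_, ?_⟩
  · -- momentum equations
    intro t x y z
    refine ⟨?_, ?_, ?_⟩
    · -- first component
      simp only [hv₁, hv₂, hv₃, hu₁, hu₂, hu₃, mul_zero, zero_mul]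
      rw [show deriv (fun t' => γ₀ * Real.exp (-lam * t') * (Z z * Pu m n a b c d x y)) t
            = -lam * (γ₀ * Real.exp (-lam * t) * (Z z * Pu m n a b c d x y)) from
          ((((hd_exp (-lam) t).const_mul γ₀).mul_const
            (Z z * Pu m n a b c d x y)).congr_deriv (by ring)).deriv]
      rw [show deriv (deriv (fun x' => γ₀ * Real.exp (-lam * t) * (Z z * Pu m n a b c d x' y))) x
            = -((m:ℝ)^2) * (γ₀ * Real.exp (-lam * t) * (Z z * Pu m n a b c d x y)) from by
        rw [show deriv (fun x' => γ₀ * Real.exp (-lam * t) * (Z z * Pu m n a b c d x' y))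
              = fun x' => (γ₀ * Real.exp (-lam * t) * Z z * (-(m:ℝ))) * Sf m n a b c d x' y from
            funext fun x' => (((hPu_x m n a b c d x' y).const_mul (Z z)).const_mul
              (γ₀ * Real.exp (-lam * t)) |>.congr_deriv (by ring)).deriv]
        exact ((hS_x m n a b c d x y).const_mul (γ₀ * Real.exp (-lam * t) * Z z * (-(m:ℝ)))
          |>.congr_deriv (by ring)).deriv]
      rw [show deriv (deriv (fun y' => γ₀ * Real.exp (-lam * t) * (Z z * Pu m n a b c d x y'))) y
            = -((n:ℝ)^2) * (γ₀ * Real.exp (-lam * t) * (Z z * Pu m n a b c d x y)) from by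
        rw [show deriv (fun y' => γ₀ * Real.exp (-lam * t) * (Z z * Pu m n a b c d x y'))
              = fun y' => (γ₀ * Real.exp (-lam * t) * Z z * ((n:ℝ))) * Tf m n a b c d x y' from
            funext fun y' => (((hPu_y m n a b c d x y').const_mul (Z z)).const_mul
              (γ₀ * Real.exp (-lam * t)) |>.congr_deriv (by ring)).deriv]
        exact ((hT_y m n a b c d x y).const_mul (γ₀ * Real.exp (-lam * t) * Z z * ((n:ℝ)))
          |>.congr_deriv (by ring)).deriv]
      rw [show deriv (deriv (fun z' => γ₀ * Real.exp (-lam * t) * (Z z' * Pu m n a b c d x y))) z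
            = -(γ^2) * (γ₀ * Real.exp (-lam * t) * (Z z * Pu m n a b c d x y)) from by
        rw [show deriv (fun z' => γ₀ * Real.exp (-lam * t) * (Z z' * Pu m n a b c d x y))
              = fun z' => (γ₀ * Real.exp (-lam * t) * Pu m n a b c d x y) * W z' from
            funext fun z' => (((hZW z').mul_const (Pu m n a b c d x y)).const_mul
              (γ₀ * Real.exp (-lam * t)) |>.congr_deriv (by ring)).deriv]
        exact ((hWd z).const_mul (γ₀ * Real.exp (-lam * t) * Pu m n a b c d x y)
          |>.congr_deriv (by ring)).deriv]
      rw [show deriv (fun x' => γ₀ * Real.exp (-lam * t) * (Z z * Pu m n a b c d x' y)) x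
            = -(m:ℝ) * (γ₀ * Real.exp (-lam * t) * (Z z * Sf m n a b c d x y)) from
          (((hPu_x m n a b c d x y).const_mul (Z z)).const_mul (γ₀ * Real.exp (-lam * t))
            |>.congr_deriv (by ring)).deriv]
      rw [show deriv (fun y' => γ₀ * Real.exp (-lam * t) * (Z z * Pu m n a b c d x y')) y
            = (n:ℝ) * (γ₀ * Real.exp (-lam * t) * (Z z * Tf m n a b c d x y)) from
          (((hPu_y m n a b c d x y).const_mul (Z z)).const_mul (γ₀ * Real.exp (-lam * t))
            |>.congr_deriv (by ring)).deriv]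
      subst hlam
      rcases hcoef with ⟨rfl, rfl⟩ | ⟨rfl, rfl⟩ <;>
        · unfold Pu Pv Sf Tf; field_simp; ring
    · -- second component
      simp only [hv₁, hv₂, hv₃, hu₁, hu₂, hu₃, mul_zero, zero_mul]
      rw [show deriv (fun t' => γ₀ * Real.exp (-lam * t') *
              (-((m:ℝ)/(n:ℝ)) * Z z * Pv m n a b c d x y)) t
            = -lam * (γ₀ * Real.exp (-lam * t) * (-((m:ℝ)/(n:ℝ)) * Z z * Pv m n a b c d x y)) from
          ((((hd_exp (-lam) t).const_mul γ₀).mul_const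
            (-((m:ℝ)/(n:ℝ)) * Z z * Pv m n a b c d x y)).congr_deriv (by ring)).deriv]
      rw [show deriv (deriv (fun x' => γ₀ * Real.exp (-lam * t) *
              (-((m:ℝ)/(n:ℝ)) * Z z * Pv m n a b c d x' y))) x
            = -((m:ℝ)^2) * (γ₀ * Real.exp (-lam * t) *
              (-((m:ℝ)/(n:ℝ)) * Z z * Pv m n a b c d x y)) from by
        rw [show deriv (fun x' => γ₀ * Real.exp (-lam * t) *
                (-((m:ℝ)/(n:ℝ)) * Z z * Pv m n a b c d x' y))
              = fun x' => (γ₀ * Real.exp (-lam * t) * (-((m:ℝ)/(n:ℝ))) * Z z * (m:ℝ))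
                  * Tf m n a b c d x' y from
            funext fun x' => ((((hPv_x m n a b c d x' y).const_mul
              (-((m:ℝ)/(n:ℝ)) * Z z)).const_mul
              (γ₀ * Real.exp (-lam * t))).congr_deriv (by ring)).deriv]
        exact ((hT_x m n a b c d x y).const_mul
          (γ₀ * Real.exp (-lam * t) * (-((m:ℝ)/(n:ℝ))) * Z z * (m:ℝ))
          |>.congr_deriv (by ring)).deriv]
      rw [show deriv (deriv (fun y' => γ₀ * Real.exp (-lam * t) *
              (-((m:ℝ)/(n:ℝ)) * Z z * Pv m n a b c d x y'))) y
            = -((n:ℝ)^2) * (γ₀ * Real.exp (-lam * t) *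
              (-((m:ℝ)/(n:ℝ)) * Z z * Pv m n a b c d x y)) from by
        rw [show deriv (fun y' => γ₀ * Real.exp (-lam * t) *
                (-((m:ℝ)/(n:ℝ)) * Z z * Pv m n a b c d x y'))
              = fun y' => (γ₀ * Real.exp (-lam * t) * (-((m:ℝ)/(n:ℝ))) * Z z * (-(n:ℝ)))
                  * Sf m n a b c d x y' from
            funext fun y' => ((((hPv_y m n a b c d x y').const_mul
              (-((m:ℝ)/(n:ℝ)) * Z z)).const_mul
              (γ₀ * Real.exp (-lam * t))).congr_deriv (by ring)).deriv]
        exact ((hS_y m n a b c d x y).const_mul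
          (γ₀ * Real.exp (-lam * t) * (-((m:ℝ)/(n:ℝ))) * Z z * (-(n:ℝ)))
          |>.congr_deriv (by ring)).deriv]
      rw [show deriv (deriv (fun z' => γ₀ * Real.exp (-lam * t) *
              (-((m:ℝ)/(n:ℝ)) * Z z' * Pv m n a b c d x y))) z
            = -(γ^2) * (γ₀ * Real.exp (-lam * t) *
              (-((m:ℝ)/(n:ℝ)) * Z z * Pv m n a b c d x y)) from by
        rw [show deriv (fun z' => γ₀ * Real.exp (-lam * t) *
                (-((m:ℝ)/(n:ℝ)) * Z z' * Pv m n a b c d x y))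
              = fun z' => (γ₀ * Real.exp (-lam * t) * (-((m:ℝ)/(n:ℝ))) * Pv m n a b c d x y)
                  * W z' from
            funext fun z' => ((((hZW z').const_mul (-((m:ℝ)/(n:ℝ)))).mul_const
              (Pv m n a b c d x y)).const_mul
              (γ₀ * Real.exp (-lam * t)) |>.congr_deriv (by ring)).deriv]
        exact ((hWd z).const_mul
          (γ₀ * Real.exp (-lam * t) * (-((m:ℝ)/(n:ℝ))) * Pv m n a b c d x y)
          |>.congr_deriv (by ring)).deriv]
      rw [show deriv (fun x' => γ₀ * Real.exp (-lam * t) *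
              (-((m:ℝ)/(n:ℝ)) * Z z * Pv m n a b c d x' y)) x
            = (m:ℝ) * (γ₀ * Real.exp (-lam * t) *
              (-((m:ℝ)/(n:ℝ)) * Z z * Tf m n a b c d x y)) from
          ((((hPv_x m n a b c d x y).const_mul (-((m:ℝ)/(n:ℝ)) * Z z)).const_mul
            (γ₀ * Real.exp (-lam * t))).congr_deriv (by ring)).deriv]
      rw [show deriv (fun y' => γ₀ * Real.exp (-lam * t) *
              (-((m:ℝ)/(n:ℝ)) * Z z * Pv m n a b c d x y')) y
            = -(n:ℝ) * (γ₀ * Real.exp (-lam * t) *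
              (-((m:ℝ)/(n:ℝ)) * Z z * Sf m n a b c d x y)) from
          ((((hPv_y m n a b c d x y).const_mul (-((m:ℝ)/(n:ℝ)) * Z z)).const_mul
            (γ₀ * Real.exp (-lam * t))).congr_deriv (by ring)).deriv]
      subst hlam
      rcases hcoef with ⟨rfl, rfl⟩ | ⟨rfl, rfl⟩ <;>
        · unfold Pu Pv Sf Tf; field_simp; ring
    · -- third component
      simp [hv₃, hu₃]
  · -- divergence free
    intro t x y z
    simp only [hv₁, hv₂, hv₃, hu₁, hu₂, hu₃, mul_zero]
    rw [show deriv (fun x' => γ₀ * Real.exp (-lam * t) * (Z z * Pu m n a b c d x' y)) x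
          = -(m:ℝ) * (γ₀ * Real.exp (-lam * t) * (Z z * Sf m n a b c d x y)) from
        (((hPu_x m n a b c d x y).const_mul (Z z)).const_mul (γ₀ * Real.exp (-lam * t))
          |>.congr_deriv (by ring)).deriv]
    rw [show deriv (fun y' => γ₀ * Real.exp (-lam * t) *
            (-((m:ℝ)/(n:ℝ)) * Z z * Pv m n a b c d x y')) y
          = -(n:ℝ) * (γ₀ * Real.exp (-lam * t) *
            (-((m:ℝ)/(n:ℝ)) * Z z * Sf m n a b c d x y)) from
        ((((hPv_y m n a b c d x y).const_mul (-((m:ℝ)/(n:ℝ)) * Z z)).const_mul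
          (γ₀ * Real.exp (-lam * t))).congr_deriv (by ring)).deriv]
    rw [show deriv (fun _ : ℝ => (0:ℝ)) z = 0 from by simp]
    field_simp
    ring
  · -- third component vanishes
    intro t x y z
    simp [hv₃, hu₃]
  · -- boundary conditions
    intro t x y
    simp only [hv₁, hv₂, hu₁, hu₂]
    have hz1 : ∀ z₀ : ℝ, deriv (fun z => γ₀ * Real.exp (-lam * t) *
        (Z z * Pu m n a b c d x y)) z₀
        = γ₀ * Real.exp (-lam * t) * (W z₀ * Pu m n a b c d x y) := fun z₀ =>
      (((hZW z₀).mul_const (Pu m n a b c d x y)).const_mul (γ₀ * Real.exp (-lam * t))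
        |>.congr_deriv (by ring)).deriv
    have hz2 : ∀ z₀ : ℝ, deriv (fun z => γ₀ * Real.exp (-lam * t) *
        (-((m:ℝ)/(n:ℝ)) * Z z * Pv m n a b c d x y)) z₀
        = γ₀ * Real.exp (-lam * t) * (-((m:ℝ)/(n:ℝ)) * W z₀ * Pv m n a b c d x y) := fun z₀ =>
      ((((hZW z₀).const_mul (-((m:ℝ)/(n:ℝ)))).mul_const (Pv m n a b c d x y)).const_mul
        (γ₀ * Real.exp (-lam * t)) |>.congr_deriv (by ring)).deriv
    refine ⟨?_, ?_, ?_, ?_⟩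
    · rw [hz1 1]
      linear_combination (γ₀ * Real.exp (-lam * t) * Pu m n a b c d x y) * hb1
    · rw [hz2 1]
      linear_combination (γ₀ * Real.exp (-lam * t) * (-((m:ℝ)/(n:ℝ))) * Pv m n a b c d x y) * hb1
    · rw [hz1 (-1)]
      linear_combination (γ₀ * Real.exp (-lam * t) * Pu m n a b c d x y) * hb2
    · rw [hz2 (-1)]
      linear_combination (γ₀ * Real.exp (-lam * t) * (-((m:ℝ)/(n:ℝ))) * Pv m n a b c d x y) * hb2
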